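/- The function f : ℝ³ → ℝ defined by f(x,y,σ) = x + 6yσ − x³ − 21(xσ² − (1/8)xy⁴ + (1/3)y³σ − (1/40)x⁵) satisfies Δ_H f = 0 at every point of ℝ³. Moreover, X₁ f = 1 − 3(x²+y²) − 21σ² + (21/8)x⁴ + (49/8)y⁴ + 21xyσ and X₂ f = 6σ + 3xy − 21σ(x²+y²) + 7xy³ at every point of ℝ³. -/
import Mathlib


noncomputable section

/-- Partial derivative `∂_x` on `ℝ³ = ℝ × ℝ × ℝ` with coordinates `(x, y, σ)`. -/
def Dx (f : ℝ × ℝ × ℝ → ℝ) (p : ℝ × ℝ × ℝ) : ℝ := fderiv ℝ f p (1, 0, 0)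

/-- Partial derivative `∂_y`. -/
def Dy (f : ℝ × ℝ × ℝ → ℝ) (p : ℝ × ℝ × ℝ) : ℝ := fderiv ℝ f p (0, 1, 0)

/-- Partial derivative `∂_σ`. -/
def Ds (f : ℝ × ℝ × ℝ → ℝ) (p : ℝ × ℝ × ℝ) : ℝ := fderiv ℝ f p (0, 0, 1)

/-- The left-invariant horizontal vector field `X₁ = ∂_x − (y/2)∂_σ` of `ℍ¹`. -/
def X1 (f : ℝ × ℝ × ℝ → ℝ) (p : ℝ × ℝ × ℝ) : ℝ := Dx f p - p.2.1 / 2 * Ds f p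

/-- The left-invariant horizontal vector field `X₂ = ∂_y + (x/2)∂_σ` of `ℍ¹`. -/
def X2 (f : ℝ × ℝ × ℝ → ℝ) (p : ℝ × ℝ × ℝ) : ℝ := Dy f p + p.1 / 2 * Ds f p

/-- The right-invariant horizontal vector field `X̃₁ = ∂_x + (y/2)∂_σ` of `ℍ¹`. -/
def X1r (f : ℝ × ℝ × ℝ → ℝ) (p : ℝ × ℝ × ℝ) : ℝ := Dx f p + p.2.1 / 2 * Ds f p

/-- The right-invariant horizontal vector field `X̃₂ = ∂_y − (x/2)∂_σ` of `ℍ¹`. -/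
def X2r (f : ℝ × ℝ × ℝ → ℝ) (p : ℝ × ℝ × ℝ) : ℝ := Dy f p - p.1 / 2 * Ds f p

/-- The horizontal Laplacian `Δ_H = X₁² + X₂²` of `ℍ¹`. -/
def lapH (f : ℝ × ℝ × ℝ → ℝ) (p : ℝ × ℝ × ℝ) : ℝ := X1 (X1 f) p + X2 (X2 f) p

/-- The left carré du champ `|∇_H f|² = (X₁f)² + (X₂f)²`. -/
def gammaL (f : ℝ × ℝ × ℝ → ℝ) (p : ℝ × ℝ × ℝ) : ℝ := (X1 f p) ^ 2 + (X2 f p) ^ 2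

/-- The right carré du champ `|∇̃_H f|² = (X̃₁f)² + (X̃₂f)²`. -/
def gammaR (f : ℝ × ℝ × ℝ → ℝ) (p : ℝ × ℝ × ℝ) : ℝ := (X1r f p) ^ 2 + (X2r f p) ^ 2

/-- The counterexample function
`f(x,y,σ) = x + 6yσ − x³ − 21(xσ² − (1/8)xy⁴ + (1/3)y³σ − (1/40)x⁵)`. -/
def fex : ℝ × ℝ × ℝ → ℝ := fun p =>
  p.1 + 6 * p.2.1 * p.2.2 - p.1 ^ 3
    - 21 * (p.1 * p.2.2 ^ 2 - (1 / 8) * p.1 * p.2.1 ^ 4 + (1 / 3) * p.2.1 ^ 3 * p.2.2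
      - (1 / 40) * p.1 ^ 5)


open ContinuousLinearMap in
private lemma aux_hx (p : ℝ × ℝ × ℝ) :
    HasFDerivAt (fun q : ℝ × ℝ × ℝ => q.1) (fst ℝ ℝ (ℝ × ℝ)) p := hasFDerivAt_fst

open ContinuousLinearMap in
private lemma aux_hy (p : ℝ × ℝ × ℝ) :
    HasFDerivAt (fun q : ℝ × ℝ × ℝ => q.2.1)
      ((fst ℝ ℝ ℝ).comp (snd ℝ ℝ (ℝ × ℝ))) p := hasFDerivAt_fst.comp p hasFDerivAt_snd

open ContinuousLinearMap in
private lemma aux_hs (p : ℝ × ℝ × ℝ) :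
    HasFDerivAt (fun q : ℝ × ℝ × ℝ => q.2.2)
      ((snd ℝ ℝ ℝ).comp (snd ℝ ℝ (ℝ × ℝ))) p := hasFDerivAt_snd.comp p hasFDerivAt_snd

private lemma aux_npow {f : ℝ × ℝ × ℝ → ℝ} {f' : ℝ × ℝ × ℝ →L[ℝ] ℝ} {p : ℝ × ℝ × ℝ}
    (h : HasFDerivAt f f' p) (n : ℕ) :
    HasFDerivAt (fun x => f x ^ n) (((n : ℝ) * f p ^ (n - 1)) • f') p :=
  (hasDerivAt_pow n (f p)).comp_hasFDerivAt p h

private lemma aux_X1fex : X1 fex = fun p : ℝ × ℝ × ℝ =>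
    1 - 3 * (p.1 ^ 2 + p.2.1 ^ 2) - 21 * p.2.2 ^ 2
      + (21 / 8) * p.1 ^ 4 + (49 / 8) * p.2.1 ^ 4 + 21 * p.1 * p.2.1 * p.2.2 := by
  funext p
  have hA := (aux_hx p).mul (aux_npow (aux_hs p) 2)
  have hB := ((aux_hx p).const_mul (1/8)).mul (aux_npow (aux_hy p) 4)
  have hC := ((aux_npow (aux_hy p) 3).const_mul (1/3)).mul (aux_hs p)
  have hD := (aux_npow (aux_hx p) 5).const_mul (1/40)
  have hT := ((aux_hx p).add (((aux_hy p).const_mul 6).mul (aux_hs p))).sub (aux_npow (aux_hx p) 3)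
  have h : HasFDerivAt fex _ p := hT.sub ((((hA.sub hB).add hC).sub hD).const_mul 21)
  rw [X1, Dx, Ds, h.fderiv]
  simp
  ring

private lemma aux_X2fex : X2 fex = fun p : ℝ × ℝ × ℝ =>
    6 * p.2.2 + 3 * p.1 * p.2.1 - 21 * p.2.2 * (p.1 ^ 2 + p.2.1 ^ 2)
      + 7 * p.1 * p.2.1 ^ 3 := by
  funext p
  have hA := (aux_hx p).mul (aux_npow (aux_hs p) 2)
  have hB := ((aux_hx p).const_mul (1/8)).mul (aux_npow (aux_hy p) 4)
  have hC := ((aux_npow (aux_hy p) 3).const_mul (1/3)).mul (aux_hs p)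
  have hD := (aux_npow (aux_hx p) 5).const_mul (1/40)
  have hT := ((aux_hx p).add (((aux_hy p).const_mul 6).mul (aux_hs p))).sub (aux_npow (aux_hx p) 3)
  have h : HasFDerivAt fex _ p := hT.sub ((((hA.sub hB).add hC).sub hD).const_mul 21)
  rw [X2, Dy, Ds, h.fderiv]
  simp
  ring

private lemma aux_lap (p : ℝ × ℝ × ℝ) : lapH fex p = 0 := by
  rw [lapH, aux_X1fex, aux_X2fex]
  have hg1 : HasFDerivAt (fun p : ℝ × ℝ × ℝ =>
      1 - 3 * (p.1 ^ 2 + p.2.1 ^ 2) - 21 * p.2.2 ^ 2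
        + (21 / 8) * p.1 ^ 4 + (49 / 8) * p.2.1 ^ 4 + 21 * p.1 * p.2.1 * p.2.2) _ p :=
    (((((hasFDerivAt_const (1:ℝ) p).sub
        (((aux_npow (aux_hx p) 2).add (aux_npow (aux_hy p) 2)).const_mul 3)).sub
      ((aux_npow (aux_hs p) 2).const_mul 21)).add
        ((aux_npow (aux_hx p) 4).const_mul (21/8))).add
          ((aux_npow (aux_hy p) 4).const_mul (49/8))).add
            ((((aux_hx p).const_mul 21).mul (aux_hy p)).mul (aux_hs p))
  have hg2 : HasFDerivAt (fun p : ℝ × ℝ × ℝ =>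
      6 * p.2.2 + 3 * p.1 * p.2.1 - 21 * p.2.2 * (p.1 ^ 2 + p.2.1 ^ 2)
        + 7 * p.1 * p.2.1 ^ 3) _ p :=
    ((((aux_hs p).const_mul 6).add (((aux_hx p).const_mul 3).mul (aux_hy p))).sub
      (((aux_hs p).const_mul 21).mul ((aux_npow (aux_hx p) 2).add (aux_npow (aux_hy p) 2)))).add
        (((aux_hx p).const_mul 7).mul (aux_npow (aux_hy p) 3))
  simp only [X1, X2, Dx, Dy, Ds]
  rw [hg1.fderiv, hg2.fderiv]
  simp
  ring

/-- The function `fex` is `Δ_H`-harmonic on all of `ℝ³`, with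
`X₁ f = 1 − 3(x²+y²) − 21σ² + (21/8)x⁴ + (49/8)y⁴ + 21xyσ` and
`X₂ f = 6σ + 3xy − 21σ(x²+y²) + 7xy³`. -/
theorem fex_harmonic_and_derivatives :
    ∀ p : ℝ × ℝ × ℝ,
      lapH fex p = 0 ∧
      X1 fex p = 1 - 3 * (p.1 ^ 2 + p.2.1 ^ 2) - 21 * p.2.2 ^ 2
        + (21 / 8) * p.1 ^ 4 + (49 / 8) * p.2.1 ^ 4 + 21 * p.1 * p.2.1 * p.2.2 ∧
      X2 fex p = 6 * p.2.2 + 3 * p.1 * p.2.1 - 21 * p.2.2 * (p.1 ^ 2 + p.2.1 ^ 2)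
        + 7 * p.1 * p.2.1 ^ 3 := by
  intro p
  exact ⟨aux_lap p, congrFun aux_X1fex p, congrFun aux_X2fex p⟩
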